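/- For every t ∈ [−1, 1] and every n ∈ ℕ: (1/2π)∫₀^{2π} P_n( √(1 − t²)·cos θ ) dθ = δ_n·P_n(t), where δ_n = (−1)^m·(2m−1)!!/(2m)!! if n = 2m is even, and δ_n = 0 if n is odd. -/

import Mathlib

open Real Polynomial intervalIntegral
open scoped Nat

/-- The `n`-th Legendre polynomial, via the Rodrigues formula. -/
noncomputable def legendre (n : ℕ) : Polynomial ℝ :=
  Polynomial.C (1 / ((2:ℝ) ^ n * n.factorial)) *
    Polynomial.derivative^[n] ((Polynomial.X ^ 2 - 1) ^ n)

/-- `δ_n = (−1)^m (2m−1)‼/(2m)‼` if `n = 2m` is even, and `0` if `n` is odd. -/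
noncomputable def legDelta (n : ℕ) : ℝ :=
  if Even n then (-1 : ℝ) ^ (n / 2) * ((2 * (n / 2) - 1)‼ : ℝ) / ((2 * (n / 2))‼ : ℝ) else 0

namespace Stmt6Aux

/-- normalized cosine power integral -/
noncomputable def cc (k : ℕ) : ℝ := (∫ θ in (0:ℝ)..(2*π), Real.cos θ ^ k) / (2*π)

lemma cc_zero : cc 0 = 1 := by
  simp [cc]

lemma cc_one : cc 1 = 0 := by
  simp [cc]

lemma cc_rec (k : ℕ) : ((k:ℝ)+2) * cc (k+2) = ((k:ℝ)+1) * cc k := by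
  unfold cc
  rw [integral_cos_pow]
  simp [Real.sin_two_pi]
  have hπ : (2*π) ≠ 0 := by positivity
  field_simp

lemma cc_odd (j : ℕ) : cc (2*j+1) = 0 := by
  induction j with
  | zero => simpa using cc_one
  | succ m ih =>
      have h := cc_rec (2*m+1)
      have h2 : (2*(m+1)+1) = (2*m+1)+2 := by ring
      rw [h2]
      have hne : ((2*m+1:ℕ):ℝ)+2 ≠ 0 := by positivity
      have := h
      rw [ih, mul_zero] at this
      exact by
        have := mul_eq_zero.mp this
        rcases this with h' | h'
        · exact absurd h' hne
        · exact h'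

lemma cc_even (j : ℕ) : cc (2*j) = ((2*j-1)‼ : ℝ) / ((2*j)‼ : ℝ) := by
  induction j with
  | zero => simpa using cc_zero
  | succ m ih =>
      have h := cc_rec (2*m)
      have h2 : 2*(m+1) = (2*m)+2 := by ring
      rw [h2]
      have hdne : ((2*m)‼ : ℝ) ≠ 0 := by exact_mod_cast (Nat.doubleFactorial_pos (2*m)).ne'
      have hdf1 : ((2*m)+2)‼ = ((2*m)+2) * (2*m)‼ := Nat.doubleFactorial_add_two _
      have hdf2 : ((2*m)+2-1)‼ = ((2*m)+1) * (2*m-1)‼ := by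
        have : (2*m)+2-1 = (2*m-1)+2 ∨ m = 0 := by omega
        rcases this with h' | h'
        · rw [h', Nat.doubleFactorial_add_two]
          congr 1
          omega
        · subst h'; rfl
      rw [ih] at h
      rw [hdf1, hdf2]
      push_cast
      have hk2 : ((2*m:ℕ):ℝ)+2 ≠ 0 := by positivity
      field_simp at h ⊢
      push_cast at h
      nlinarith [h]


noncomputable def Lop (p : Polynomial ℝ) : Polynomial ℝ :=
  (1 - X^2) * derivative (derivative p) - (C 2 * X) * derivative p

lemma Lop_C_mul (a : ℝ) (p : Polynomial ℝ) : Lop (C a * p) = C a * Lop p := by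
  simp only [Lop, derivative_C_mul]; ring

lemma Lop_sub (p q : Polynomial ℝ) : Lop (p - q) = Lop p - Lop q := by
  simp only [Lop, derivative_sub]; ring

lemma iter3 (k : ℕ) (hk : 3 ≤ k) : derivative^[k] (((X:Polynomial ℝ)^2 - 1)) = 0 := by
  obtain ⟨j, rfl⟩ : ∃ j, k = j + 3 := ⟨k - 3, by omega⟩
  rw [Function.iterate_add_apply]
  have h3 : derivative^[3] (((X:Polynomial ℝ)^2 - 1)) = 0 := by
    show derivative (derivative (derivative _)) = 0
    simp [derivative_X_pow]
  rw [h3]; simp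

lemma iterX (k : ℕ) (hk : 2 ≤ k) : derivative^[k] ((X:Polynomial ℝ)) = 0 := by
  obtain ⟨j, rfl⟩ : ∃ j, k = j + 2 := ⟨k - 2, by omega⟩
  rw [Function.iterate_add_apply]
  have h2 : derivative^[2] ((X:Polynomial ℝ)) = 0 := by
    show derivative (derivative _) = 0; simp
  rw [h2]; simp

lemma ode_v (n : ℕ) :
    Lop (derivative^[n] (((X:Polynomial ℝ)^2 - 1)^n))
      + C ((n:ℝ)*(n+1)) * derivative^[n] (((X:Polynomial ℝ)^2 - 1)^n) = 0 := by
  rcases Nat.eq_zero_or_pos n with rfl | hn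
  · simp [Lop]
  set w : Polynomial ℝ := ((X:Polynomial ℝ)^2 - 1)^n with hw
  have key : derivative w * ((X:Polynomial ℝ)^2 - 1) = (C (2*(n:ℝ)) * X) * w := by
    obtain ⟨m, rfl⟩ : ∃ m, n = m + 1 := ⟨n - 1, by omega⟩
    rw [hw, derivative_pow]
    have h1 : (m+1)-1 = m := rfl
    rw [h1]
    have hd : derivative ((X:Polynomial ℝ)^2 - 1) = C 2 * X := by
      simp [derivative_X_pow]
      rw [map_ofNat C 2]; norm_num
    rw [hd]
    simp only [C_eq_natCast, map_ofNat, map_mul, pow_succ]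
    push_cast
    ring
  have E := congrArg (fun p => derivative^[n+1] p) key
  -- expand LHS of E
  rw [Polynomial.iterate_derivative_mul] at E
  have hsub : ∑ k ∈ Finset.range (n+2), (n+1).choose k •
        (derivative^[n+1-k] (derivative w) * derivative^[k] (((X:Polynomial ℝ)^2 - 1)))
      = ∑ k ∈ Finset.range 3, (n+1).choose k •
        (derivative^[n+1-k] (derivative w) * derivative^[k] (((X:Polynomial ℝ)^2 - 1))) := by
    refine (Finset.sum_subset ?_ ?_).symm
    · intro x hx
      simp only [Finset.mem_range] at *
      omega
    · intro x _ hx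
      simp only [Finset.mem_range, not_lt] at hx
      rw [iter3 x hx, mul_zero, smul_zero]
  rw [hsub] at E
  -- expand RHS of E
  rw [mul_assoc, Polynomial.iterate_derivative_C_mul, mul_comm (X:Polynomial ℝ) w,
    Polynomial.iterate_derivative_mul] at E
  have hsub2 : ∑ k ∈ Finset.range (n+2), (n+1).choose k •
        (derivative^[n+1-k] w * derivative^[k] ((X:Polynomial ℝ)))
      = ∑ k ∈ Finset.range 2, (n+1).choose k •
        (derivative^[n+1-k] w * derivative^[k] ((X:Polynomial ℝ))) := by
    refine (Finset.sum_subset ?_ ?_).symm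
    · intro x hx
      simp only [Finset.mem_range] at *
      omega
    · intro x _ hx
      simp only [Finset.mem_range, not_lt] at hx
      rw [iterX x hx, mul_zero, smul_zero]
  rw [hsub2] at E
  simp only [Finset.sum_range_succ, Finset.sum_range_zero] at E
  -- clean up indices
  have e0 : n + 1 - 0 = n + 1 := rfl
  have e1 : n + 1 - 1 = n := rfl
  have e2 : n + 1 - 2 = n - 1 := rfl
  rw [e0, e1, e2] at E
  have hB : derivative^[n+1] (derivative w) = derivative^[n+2] w := by
    rw [← Function.iterate_succ_apply]
  have hB2 : derivative^[n] (derivative w) = derivative^[n+1] w := by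
    rw [← Function.iterate_succ_apply]
  have hB3 : derivative^[n-1] (derivative w) = derivative^[n] w := by
    rw [← Function.iterate_succ_apply]
    congr 1
    omega
  rw [hB, hB2, hB3] at E
  have hD1 : derivative ((X:Polynomial ℝ)^2 - 1) = C 2 * X := by
    simp [derivative_X_pow]
    rw [map_ofNat C 2]; norm_num
  have hD2 : derivative^[2] ((X:Polynomial ℝ)^2 - 1) = C 2 := by
    show derivative (derivative _) = _
    rw [hD1]; simp
  have hDX : derivative (X:Polynomial ℝ) = 1 := derivative_X
  simp only [Function.iterate_one, Function.iterate_zero_apply, hD1, hD2, hDX] at E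
  -- choose values
  have hch : ((n+1).choose 2 * 2) = n * (n+1) := by
    rw [Nat.choose_two_right]
    have h2 : 2 ∣ (n+1) * (n+1-1) := by
      have := Nat.even_mul_succ_self n
      have h' : (n+1) * (n+1-1) = n * (n+1) := by
        have : n + 1 - 1 = n := rfl
        rw [this]; ring
      rw [h']
      exact this.two_dvd
    rw [Nat.div_mul_cancel h2]
    have : n + 1 - 1 = n := rfl
    rw [this]; ring
  -- convert smul to cast-mul and finish
  simp only [nsmul_eq_mul, Nat.choose_zero_right, Nat.choose_one_right, Nat.cast_one, one_mul] at E
  have hBA : derivative (derivative^[n] w) = derivative^[n+1] w :=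
    (Function.iterate_succ_apply' _ _ _).symm
  have hCB : derivative (derivative^[n+1] w) = derivative^[n+2] w :=
    (Function.iterate_succ_apply' _ _ _).symm
  set A := derivative^[n] w
  set B := derivative^[n+1] w
  set Cc := derivative^[n+2] w
  have hchR : (((n+1).choose 2 : ℕ) : Polynomial ℝ) * 2 = (n:Polynomial ℝ) * ((n:Polynomial ℝ)+1) := by
    exact_mod_cast congrArg (fun k : ℕ => ((k : ℕ) : Polynomial ℝ)) hch
  have hCn : C ((n:ℝ)*(n+1)) = (n : Polynomial ℝ) * ((n : Polynomial ℝ)+1) := by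
    simp [map_mul, map_add, C_eq_natCast]
  rw [Lop, hBA, hCB, hCn]
  have hC2 : (C (2:ℝ) : Polynomial ℝ) = 2 := map_ofNat C 2
  have hC2n : (C (2*(n:ℝ)) : Polynomial ℝ) = 2 * (n : Polynomial ℝ) := by
    rw [map_mul, map_ofNat, C_eq_natCast]
  rw [hC2n, hC2] at E
  rw [hC2]
  push_cast at E hchR ⊢
  linear_combination A * hchR - E

/-- coefficient formula for the Legendre operator, valid for every k (with real casts). -/
lemma coeff_Lop (p : Polynomial ℝ) (k : ℕ) :
    (Lop p).coeff k = ((k:ℝ)+1)*((k:ℝ)+2) * p.coeff (k+2)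
      - ((k:ℝ)-1)*(k:ℝ) * p.coeff k - 2*(k:ℝ) * p.coeff k := by
  have hr : ∀ j, (derivative (derivative p)).coeff j = p.coeff (j+2) * ((j:ℝ)+1) * ((j:ℝ)+2) := by
    intro j
    rw [coeff_derivative, coeff_derivative]
    push_cast
    ring
  have h1 : ((1 - X^2) * derivative (derivative p)).coeff k
      = (derivative (derivative p)).coeff k - (derivative (derivative p) * X^2).coeff k := by
    rw [sub_mul, one_mul, mul_comm (X^2)]
    simp [coeff_sub]
  have h2 : ((C 2 * X) * derivative p).coeff k = 2 * (derivative p * X).coeff k := by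
    rw [mul_assoc, mul_comm (X:Polynomial ℝ) (derivative p), coeff_C_mul]
  rw [Lop, coeff_sub, h1, h2, hr]
  rcases k with _ | _ | k
  · simp [coeff_mul_X_pow', coeff_mul_X]
    ring
  · have e1 : (derivative (derivative p) * X^2).coeff 1 = 0 := by
      rw [coeff_mul_X_pow']; norm_num
    have e2 : (derivative p * X).coeff 1 = (derivative p).coeff 0 := coeff_mul_X _ _
    norm_num at e1 ⊢
    rw [e1]
    simp only [coeff_mul_X, coeff_derivative]
    push_cast
    ring
  · have e1 : (derivative (derivative p) * X^2).coeff (k+2) = (derivative (derivative p)).coeff k := by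
      rw [coeff_mul_X_pow']
      norm_num
    have e2 : (derivative p * X).coeff (k+2) = (derivative p).coeff (k+1) := coeff_mul_X _ _
    have e3 : k + 1 + 1 = k + 2 := rfl
    rw [e3, e1, e2]
    simp only [coeff_derivative]
    push_cast
    ring

/-- uniqueness of polynomial eigenfunctions -/
lemma eigen_unique (n : ℕ) (q : Polynomial ℝ)
    (heq : Lop q + C ((n:ℝ)*(n+1)) * q = 0)
    (hdeg : q.natDegree ≤ n) (hc : q.coeff n = 0) : q = 0 := by
  by_contra hq
  set d := q.natDegree with hd
  have hdn : d < n := by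
    rcases lt_or_eq_of_le hdeg with h | h
    · exact h
    · exact absurd (h ▸ hc) (mt (fun h' => h') (by
        rw [← h] at hc
        exact absurd hc (leadingCoeff_ne_zero.mpr hq)))
  have hco := congrArg (fun p => Polynomial.coeff p d) heq
  simp only [coeff_add, coeff_C_mul, coeff_zero] at hco
  rw [coeff_Lop] at hco
  have hz : q.coeff (d+2) = 0 := coeff_eq_zero_of_natDegree_lt (by omega)
  rw [hz] at hco
  have hlead : q.coeff d ≠ 0 := leadingCoeff_ne_zero.mpr hq
  have hfac : ((n:ℝ)*((n:ℝ)+1) - (d:ℝ)*((d:ℝ)+1)) * q.coeff d = 0 := by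
    linear_combination hco
  have hne : (n:ℝ)*((n:ℝ)+1) - (d:ℝ)*((d:ℝ)+1) ≠ 0 := by
    have h1 : (d:ℝ) < (n:ℝ) := by exact_mod_cast hdn
    have h0 : (0:ℝ) ≤ (d:ℝ) := Nat.cast_nonneg d
    nlinarith
  exact hlead (by
    have := mul_eq_zero.mp hfac
    tauto)


lemma hDS : derivative (1 - X^2 : Polynomial ℝ) = -(C 2 * X) := by
  simp [derivative_X_pow]
  rw [map_ofNat C 2]; norm_num

lemma Lop_S_pow (j : ℕ) :
    Lop ((1 - X^2 : Polynomial ℝ)^j)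
      = C (4*(j:ℝ)^2) * (1 - X^2)^(j-1) - C (2*(j:ℝ)*(2*(j:ℝ)+1)) * (1 - X^2)^j := by
  rcases j with _ | _ | k
  · simp [Lop]
  · have hD1 : derivative ((1 - X^2 : Polynomial ℝ)^1) = -(C 2 * X) := by
      rw [pow_one, hDS]
    rw [Lop, hD1]
    have hD2 : derivative (-(C 2 * X) : Polynomial ℝ) = -C 2 := by
      simp
    rw [hD2]
    norm_num
    simp only [map_ofNat]
    ring
  · have hD1 : derivative ((1 - X^2 : Polynomial ℝ)^(k+2))
        = C ((k:ℝ)+2) * (1 - X^2)^(k+1) * (-(C 2 * X)) := by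
      rw [derivative_pow, hDS]
      norm_num
    have hD2 : derivative (C ((k:ℝ)+2) * (1 - X^2 : Polynomial ℝ)^(k+1) * (-(C 2 * X)))
        = C ((k:ℝ)+2) * (C ((k:ℝ)+1) * (1 - X^2)^k * (-(C 2 * X))) * (-(C 2 * X))
          + C ((k:ℝ)+2) * (1 - X^2)^(k+1) * (-(C 2)) := by
      rw [derivative_mul, derivative_mul, derivative_C, zero_mul, zero_add, derivative_pow, hDS]
      have e : k + 1 - 1 = k := rfl
      rw [e]
      have hDneg : derivative (-(C 2 * X) : Polynomial ℝ) = -C 2 := by simp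
      rw [hDneg]
      push_cast
      ring
    rw [Lop, hD1, hD2]
    have e2 : k + 2 - 1 = k + 1 := rfl
    rw [e2]
    simp only [pow_succ]
    push_cast
    simp only [map_mul, map_add, map_ofNat, map_one, C_1, map_pow]
    ring

/-- degree bound -/
lemma legendre_natDegree_le (n : ℕ) : (legendre n).natDegree ≤ n := by
  unfold legendre
  refine (natDegree_C_mul_le _ _).trans ?_
  refine (Polynomial.natDegree_iterate_derivative _ _).trans ?_
  have h : ((X:Polynomial ℝ)^2 - 1)^n = ((X:Polynomial ℝ)^2 - C 1)^n := by norm_num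
  rw [h]
  have hm : (((X:Polynomial ℝ)^2 - C 1)^n).natDegree = 2*n := by
    rw [(monic_X_pow_sub_C (1:ℝ) two_ne_zero).natDegree_pow]
    rw [natDegree_X_pow_sub_C]
    ring
  omega

/-- the coefficient recurrence, from the ODE -/
lemma legendre_coeff_rec (n : ℕ)
    (hode : Lop (legendre n) + C ((n:ℝ)*(n+1)) * legendre n = 0) (k : ℕ) :
    ((k:ℝ)+1)*((k:ℝ)+2) * (legendre n).coeff (k+2)
      = ((k:ℝ)*((k:ℝ)+1) - (n:ℝ)*((n:ℝ)+1)) * (legendre n).coeff k := by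
  have hco := congrArg (fun p => Polynomial.coeff p k) hode
  simp only [coeff_add, coeff_C_mul, coeff_zero] at hco
  rw [coeff_Lop] at hco
  linear_combination hco

/-- parity: for odd `n` all even coefficients vanish -/
lemma evenOnly (N : ℕ) : ∀ k, Odd k → (((X:Polynomial ℝ)^2 - 1)^N).coeff k = 0 := by
  induction N with
  | zero => intro k hk; rcases hk with ⟨u, rfl⟩; simp [coeff_one]
  | succ m ih =>
      intro k hk
      rw [pow_succ, Polynomial.coeff_mul]
      refine Finset.sum_eq_zero fun x hx => ?_
      rcases Nat.even_or_odd x.1 with he | ho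
      · have hodd2 : Odd x.2 := by
          have := Finset.HasAntidiagonal.mem_antidiagonal.mp hx
          rcases he with ⟨u, hu⟩; rcases hk with ⟨v, hv⟩
          refine ⟨v - u, by omega⟩
        have hz : ((X:Polynomial ℝ)^2 - 1).coeff x.2 = 0 := by
          rcases hodd2 with ⟨u, hu⟩
          rw [hu]
          simp [coeff_one, coeff_X_pow]
          
        rw [hz, mul_zero]
      · rw [ih x.1 ho, zero_mul]

lemma legendre_parity (n : ℕ) (hodd : Odd n) (j : ℕ) : (legendre n).coeff (2*j) = 0 := by
  have hiter : ∀ i k, Odd (k + i) → (derivative^[i] (((X:Polynomial ℝ)^2 - 1)^n)).coeff k = 0 := by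
    intro i
    induction i with
    | zero => intro k hk; exact evenOnly n k (by simpa using hk)
    | succ m ih =>
        intro k hk
        rw [Function.iterate_succ_apply', coeff_derivative]
        rw [ih (k+1) (by rw [Nat.odd_iff] at hk ⊢; omega)]
        ring
  unfold legendre
  rw [coeff_C_mul, hiter n (2*j) (by rcases hodd with ⟨u, hu⟩; exact ⟨j + u, by omega⟩), mul_zero]


lemma legendre_ode (n : ℕ) :
    Lop (legendre n) + C ((n:ℝ)*(n+1)) * legendre n = 0 := by
  unfold legendre
  rw [Lop_C_mul]
  linear_combination (C (1 / ((2:ℝ) ^ n * n.factorial))) * ode_v n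

noncomputable def Qpoly (n : ℕ) : Polynomial ℝ :=
  ∑ j ∈ Finset.range (n/2+1), C ((legendre n).coeff (2*j) * cc (2*j)) * (1 - X^2)^j

lemma Lop_sum {ι : Type*} (s : Finset ι) (f : ι → Polynomial ℝ) :
    Lop (∑ i ∈ s, f i) = ∑ i ∈ s, Lop (f i) := by
  simp [Lop, map_sum, Finset.mul_sum, Finset.sum_sub_distrib]

lemma b_rec (m j : ℕ) :
    (4*((j:ℝ)+1)^2) * ((legendre (2*m)).coeff (2*(j+1)) * cc (2*(j+1)))
      + (((2*m:ℕ):ℝ)*(((2*m:ℕ):ℝ))+((2*m:ℕ):ℝ) - 2*(j:ℝ)*(2*(j:ℝ)+1))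
        * ((legendre (2*m)).coeff (2*j) * cc (2*j)) = 0 := by
  have h1 := legendre_coeff_rec (2*m) (legendre_ode (2*m)) (2*j)
  have h2 := cc_rec (2*j)
  have e : 2*(j+1) = 2*j+2 := by ring
  rw [e]
  push_cast at h1 h2 ⊢
  linear_combination (cc (2*j)) * h1 + (2*((j:ℝ)+1) * (legendre (2*m)).coeff (2*j+2)) * h2

lemma Q_ode (m : ℕ) :
    Lop (Qpoly (2*m)) + C (((2*m:ℕ):ℝ)*(((2*m:ℕ):ℝ)+1)) * Qpoly (2*m) = 0 := by
  have hm : (2*m)/2 = m := by omega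
  unfold Qpoly
  rw [hm, Lop_sum, Finset.mul_sum, ← Finset.sum_add_distrib]
  set b : ℕ → ℝ := fun j => (legendre (2*m)).coeff (2*j) * cc (2*j) with hb
  have step : ∀ j, Lop (C (b j) * (1 - X^2)^j)
      + C (((2*m:ℕ):ℝ)*(((2*m:ℕ):ℝ)+1)) * (C (b j) * (1 - X^2)^j)
      = C (b j * (4*(j:ℝ)^2)) * (1 - X^2)^(j-1)
        + C (b j * ((((2*m:ℕ):ℝ))*(((2*m:ℕ):ℝ))+((2*m:ℕ):ℝ) - 2*(j:ℝ)*(2*(j:ℝ)+1))) * (1 - X^2)^j := by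
    intro j
    rw [Lop_C_mul, Lop_S_pow]
    simp only [map_mul, map_add, map_sub, map_ofNat, map_pow, map_one]
    ring
  rw [Finset.sum_congr rfl (fun j _ => step j)]
  rw [Finset.sum_add_distrib]
  -- first sum : reindex
  rw [Finset.sum_range_succ' (fun j => C (b j * (4*(j:ℝ)^2)) * (1 - X^2 : Polynomial ℝ)^(j-1)) m]
  rw [Finset.sum_range_succ (fun j => C (b j * ((((2*m:ℕ):ℝ))*(((2*m:ℕ):ℝ))+((2*m:ℕ):ℝ) - 2*(j:ℝ)*(2*(j:ℝ)+1))) * (1 - X^2 : Polynomial ℝ)^j) m]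
  have hz1 : C (b 0 * (4*((0:ℕ):ℝ)^2)) * (1 - X^2 : Polynomial ℝ)^(0-1) = 0 := by
    norm_num
  have hz2 : C (b m * ((((2*m:ℕ):ℝ))*(((2*m:ℕ):ℝ))+((2*m:ℕ):ℝ) - 2*(m:ℝ)*(2*(m:ℝ)+1))) * (1 - X^2 : Polynomial ℝ)^m = 0 := by
    have : ((((2*m:ℕ):ℝ))*(((2*m:ℕ):ℝ))+((2*m:ℕ):ℝ) - 2*(m:ℝ)*(2*(m:ℝ)+1)) = 0 := by
      push_cast; ring
    rw [this, mul_zero, map_zero, zero_mul]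
  rw [hz1, hz2, add_zero, add_zero, ← Finset.sum_add_distrib]
  refine Finset.sum_eq_zero fun j hj => ?_
  have e : (j + 1) - 1 = j := rfl
  rw [e, ← add_mul, ← map_add]
  have h0 : b (j+1) * (4*(((j+1:ℕ)):ℝ)^2)
      + b j * ((((2*m:ℕ):ℝ))*(((2*m:ℕ):ℝ))+((2*m:ℕ):ℝ) - 2*(j:ℝ)*(2*(j:ℝ)+1)) = 0 := by
    have hr := b_rec m j
    push_cast at hr ⊢
    linear_combination hr
  rw [h0, map_zero, zero_mul]


lemma S_pow_natDegree_le (j : ℕ) : ((1 - X^2 : Polynomial ℝ)^j).natDegree ≤ 2*j := by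
  refine (natDegree_pow_le).trans ?_
  have h : (1 - X^2 : Polynomial ℝ) = -(X^2 - C 1) := by
    rw [C_1]; ring
  rw [h, natDegree_neg, natDegree_X_pow_sub_C]
  omega

lemma S_pow_coeff_top (m : ℕ) : ((1 - X^2 : Polynomial ℝ)^m).coeff (2*m) = (-1:ℝ)^m := by
  have h : (1 - X^2 : Polynomial ℝ) = -(X^2 - C 1) := by
    rw [C_1]; ring
  rw [h, neg_pow]
  have hmon : ((X^2 - C 1 : Polynomial ℝ)^m).Monic :=
    (monic_X_pow_sub_C (1:ℝ) two_ne_zero).pow m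
  have hdeg : ((X^2 - C 1 : Polynomial ℝ)^m).natDegree = 2*m := by
    rw [(monic_X_pow_sub_C (1:ℝ) two_ne_zero).natDegree_pow, natDegree_X_pow_sub_C]
    ring
  have hC : ((-1 : Polynomial ℝ))^m = C ((-1:ℝ)^m) := by
    rw [map_pow, map_neg, C_1]
  rw [hC, coeff_C_mul, ← hdeg, hmon.coeff_natDegree, mul_one]

lemma Q_coeff (m : ℕ) : (Qpoly (2*m)).coeff (2*m)
    = (-1:ℝ)^m * ((legendre (2*m)).coeff (2*m) * cc (2*m)) := by
  unfold Qpoly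
  have hm : (2*m)/2 = m := by omega
  rw [hm, finset_sum_coeff, Finset.sum_range_succ]
  have hz : ∀ j ∈ Finset.range m,
      (C ((legendre (2*m)).coeff (2*j) * cc (2*j)) * (1 - X^2 : Polynomial ℝ)^j).coeff (2*m) = 0 := by
    intro j hj
    refine coeff_eq_zero_of_natDegree_lt ?_
    refine lt_of_le_of_lt ((natDegree_C_mul_le _ _).trans (S_pow_natDegree_le j)) ?_
    simp only [Finset.mem_range] at hj
    omega
  rw [Finset.sum_eq_zero hz, zero_add, coeff_C_mul, S_pow_coeff_top]
  ring

lemma Q_natDegree_le (m : ℕ) : (Qpoly (2*m)).natDegree ≤ 2*m := by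
  unfold Qpoly
  refine natDegree_sum_le_of_forall_le _ _ fun j hj => ?_
  refine (natDegree_C_mul_le _ _).trans ((S_pow_natDegree_le j).trans ?_)
  simp only [Finset.mem_range] at hj
  omega

lemma Q_eq (m : ℕ) : Qpoly (2*m) = C (legDelta (2*m)) * legendre (2*m) := by
  set δ := legDelta (2*m) with hδdef
  have hδ : δ = (-1:ℝ)^m * ((2*m-1)‼ : ℝ) / ((2*m)‼ : ℝ) := by
    rw [hδdef]
    unfold legDelta
    rw [if_pos (even_two_mul m)]
    have hm : (2*m)/2 = m := by omega
    rw [hm]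
  have heq : Lop (Qpoly (2*m) - C δ * legendre (2*m))
      + C (((2*m:ℕ):ℝ)*(((2*m:ℕ):ℝ)+1)) * (Qpoly (2*m) - C δ * legendre (2*m)) = 0 := by
    rw [Lop_sub, Lop_C_mul]
    linear_combination Q_ode m - (C δ) * legendre_ode (2*m)
  have hdeg : (Qpoly (2*m) - C δ * legendre (2*m)).natDegree ≤ 2*m := by
    refine (natDegree_sub_le _ _).trans (max_le (Q_natDegree_le m) ?_)
    exact (natDegree_C_mul_le _ _).trans (legendre_natDegree_le (2*m))
  have hc : (Qpoly (2*m) - C δ * legendre (2*m)).coeff (2*m) = 0 := by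
    rw [coeff_sub, Q_coeff, coeff_C_mul, cc_even, hδ]
    have hd : ((2*m)‼ : ℝ) ≠ 0 := by
      exact_mod_cast (Nat.doubleFactorial_pos (2*m)).ne'
    field_simp
    ring
  have := eigen_unique (2*m) _ heq hdeg hc
  linear_combination this


lemma integral_eval (n : ℕ) (t : ℝ) (ht : t ∈ Set.Icc (-1:ℝ) 1) :
    (1/(2*π)) * ∫ θ in (0:ℝ)..(2*π), (legendre n).eval (Real.sqrt (1 - t^2) * Real.cos θ)
      = ∑ k ∈ Finset.range (n+1),
          (legendre n).coeff k * cc k * (1 - t^2)^(k/2) := by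
  have h0 : (0:ℝ) ≤ 1 - t^2 := by
    rcases ht with ⟨h1, h2⟩
    nlinarith
  set s := Real.sqrt (1 - t^2) with hsdef
  have hs : s^2 = 1 - t^2 := Real.sq_sqrt h0
  have heval : ∀ θ : ℝ, (legendre n).eval (s * Real.cos θ)
      = ∑ k ∈ Finset.range (n+1), (legendre n).coeff k * (s * Real.cos θ)^k := fun θ =>
    eval_eq_sum_range' (lt_of_le_of_lt (legendre_natDegree_le n) (Nat.lt_succ_self n)) _
  rw [intervalIntegral.integral_congr (fun θ _ => heval θ)]
  rw [intervalIntegral.integral_finset_sum (f := fun k θ => (legendre n).coeff k * (s * Real.cos θ)^k) (fun k _ =>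
    ((continuous_const.mul ((continuous_const.mul Real.continuous_cos).pow k)).intervalIntegrable _ _))]
  rw [Finset.mul_sum]
  refine Finset.sum_congr rfl fun k _ => ?_
  have hI : (∫ θ in (0:ℝ)..(2*π), (legendre n).coeff k * (s * Real.cos θ)^k)
      = (legendre n).coeff k * s^k * (cc k * (2*π)) := by
    have : ∀ θ : ℝ, (legendre n).coeff k * (s * Real.cos θ)^k
        = ((legendre n).coeff k * s^k) * (Real.cos θ)^k := by
      intro θ; ring
    rw [intervalIntegral.integral_congr (fun θ _ => this θ), intervalIntegral.integral_const_mul]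
    unfold cc
    have hπ : (2*π) ≠ 0 := by positivity
    field_simp
  rw [hI]
  rcases Nat.even_or_odd k with ⟨u, hu⟩ | ⟨u, hu⟩
  · have hk : k = 2*u := by omega
    subst hk
    have hdiv : (2*u)/2 = u := by omega
    rw [hdiv]
    have hsk : s^(2*u) = (1 - t^2)^u := by
      rw [pow_mul, hs]
    rw [hsk]
    have hπ : π ≠ 0 := Real.pi_ne_zero
    field_simp
  · subst hu
    rw [cc_odd]
    ring

lemma sum_even_split (g : ℕ → ℝ) (hodd : ∀ u, g (2*u+1) = 0) (M : ℕ) :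
    ∑ k ∈ Finset.range (2*M+1), g k = ∑ j ∈ Finset.range (M+1), g (2*j) := by
  induction M with
  | zero => simp
  | succ m ih =>
      have h1 : 2*(m+1)+1 = (2*m+1) + 1 + 1 := by ring
      rw [h1, Finset.sum_range_succ, Finset.sum_range_succ, ih, hodd m, add_zero]
      have h2 : 2*m+1+1 = 2*(m+1) := by ring
      rw [h2]
      rw [Finset.sum_range_succ (fun j => g (2*j)) (m+1), Finset.sum_range_succ (fun j => g (2*j)) m]


end Stmt6Aux

open Stmt6Aux in
/-- `(1/2π)∫₀^{2π} P_n(√(1−t²) cos θ) dθ = δ_n P_n(t)` for `t ∈ [−1,1]`. -/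
theorem stmt_6 :
    ∀ t ∈ Set.Icc (-1 : ℝ) 1, ∀ n : ℕ,
      (1 / (2 * π)) * ∫ θ in (0:ℝ)..(2 * π),
          (legendre n).eval (Real.sqrt (1 - t ^ 2) * Real.cos θ)
        = legDelta n * (legendre n).eval t := by
  intro t ht n
  rw [integral_eval n t ht]
  rcases Nat.even_or_odd n with ⟨m, hm⟩ | hodd
  · have hn : n = 2*m := by omega
    subst hn
    have hzero : ∀ u, (legendre (2*m)).coeff (2*u+1) * cc (2*u+1) * (1 - t^2)^((2*u+1)/2) = 0 := by
      intro u
      rw [cc_odd]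
      ring
    rw [sum_even_split _ hzero m]
    have hQ : ∑ j ∈ Finset.range (m+1),
        (legendre (2*m)).coeff (2*j) * cc (2*j) * (1 - t^2)^((2*j)/2)
        = (Qpoly (2*m)).eval t := by
      unfold Qpoly
      have hm2 : (2*m)/2 = m := by omega
      rw [hm2, Polynomial.eval_finset_sum]
      refine Finset.sum_congr rfl fun j _ => ?_
      have hj : (2*j)/2 = j := by omega
      rw [hj]
      simp [eval_mul, eval_pow, eval_sub, eval_one]
    rw [hQ, Q_eq m]
    simp [eval_mul]
  · have hδ : legDelta n = 0 := by
      unfold legDelta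
      rw [if_neg ((Nat.not_even_iff_odd.mpr hodd))]
    rw [hδ, zero_mul]
    refine Finset.sum_eq_zero fun k _ => ?_
    rcases Nat.even_or_odd k with ⟨u, hu⟩ | ⟨u, hu⟩
    · have hk : k = 2*u := by omega
      subst hk
      rw [legendre_parity n hodd u]
      ring
    · subst hu
      rw [cc_odd]
      ring
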